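/- For real z with -1 < z < θ and (θ,ρ) admissible parameters, b = (1/π) arccos(p·cos(πσ)) with σ = 1/2 - θ(1-ρ), the function Ψ*(z) = (1/π) Γ(θ-z) Γ(1+z) [cos(πb) - cos(π(z+σ))] factorizes as Ψ*(z) = 2^θ · Γ((1+z)/2)Γ((2+z)/2)Γ((θ-z)/2)Γ((1+θ-z)/2) / [Γ((σ+b+z)/2)Γ((σ-b+z)/2)Γ((2-σ+b-z)/2)Γ((2-σ-b-z)/2)]. -/

import Mathlib

open Real

/-- The admissible parameter set `𝔸` for the stable process. -/
def admissiblePair (θ ρ : ℝ) : Prop :=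
  (θ ∈ Set.Ioo (0 : ℝ) 1 ∧ ρ ∈ Set.Ioo (0 : ℝ) 1) ∨
    (θ ∈ Set.Ioo (1 : ℝ) 2 ∧ ρ ∈ Set.Ioo (1 - 1 / θ) (1 / θ))

/-- For `(θ,ρ) ∈ 𝔸`, `p ∈ [0,1]`, `σ = 1/2 - θ(1-ρ)`, `b = (1/π) arccos(p cos(πσ))`, and
real `z` with `-1 < z < θ`, the Laplace exponent
`Ψ*(z) = (1/π) Γ(θ-z) Γ(1+z) [cos(πb) - cos(π(z+σ))]` factorizes in terms of gamma
functions. -/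
theorem laplace_exponent_factorization (θ ρ p σ b z : ℝ)
    (hA : admissiblePair θ ρ) (hp : p ∈ Set.Icc (0 : ℝ) 1)
    (hσ : σ = 1 / 2 - θ * (1 - ρ))
    (hb : b = Real.arccos (p * Real.cos (π * σ)) / π)
    (hz1 : -1 < z) (hz2 : z < θ) :
    (1 / π) * Real.Gamma (θ - z) * Real.Gamma (1 + z) *
        (Real.cos (π * b) - Real.cos (π * (z + σ))) =
      2 ^ θ *
        (Real.Gamma ((1 + z) / 2) * Real.Gamma ((2 + z) / 2) * Real.Gamma ((θ - z) / 2) *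
            Real.Gamma ((1 + θ - z) / 2)) /
          (Real.Gamma ((σ + b + z) / 2) * Real.Gamma ((σ - b + z) / 2) *
            Real.Gamma ((2 - σ + b - z) / 2) * Real.Gamma ((2 - σ - b - z) / 2)) := by
  have hπ : (π : ℝ) ≠ 0 := Real.pi_ne_zero
  have hsq : Real.sqrt π * Real.sqrt π = π := Real.mul_self_sqrt Real.pi_pos.le
  -- Legendre duplication for Γ(1+z)
  have d1 : Real.Gamma ((1 + z) / 2) * Real.Gamma ((2 + z) / 2)
      = Real.Gamma (1 + z) * (2 : ℝ) ^ (-z) * Real.sqrt π := by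
    have h := Real.Gamma_mul_Gamma_add_half ((1 + z) / 2)
    rw [show (1 + z) / 2 + 1 / 2 = (2 + z) / 2 by ring,
        show 2 * ((1 + z) / 2) = 1 + z by ring] at h
    rw [h]
    congr 2
    ring
  -- Legendre duplication for Γ(θ-z)
  have d2 : Real.Gamma ((θ - z) / 2) * Real.Gamma ((1 + θ - z) / 2)
      = Real.Gamma (θ - z) * (2 : ℝ) ^ (1 - θ + z) * Real.sqrt π := by
    have h := Real.Gamma_mul_Gamma_add_half ((θ - z) / 2)
    rw [show (θ - z) / 2 + 1 / 2 = (1 + θ - z) / 2 by ring,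
        show 2 * ((θ - z) / 2) = θ - z by ring] at h
    rw [h]
    congr 2
    ring
  -- Euler reflection for the two pairs in the denominator
  have r1 : Real.Gamma ((σ + b + z) / 2) * Real.Gamma ((2 - σ - b - z) / 2)
      = π / Real.sin (π * ((σ + b + z) / 2)) := by
    have h := Real.Gamma_mul_Gamma_one_sub ((σ + b + z) / 2)
    rw [show (1 : ℝ) - (σ + b + z) / 2 = (2 - σ - b - z) / 2 by ring] at h
    exact h
  have r2 : Real.Gamma ((σ - b + z) / 2) * Real.Gamma ((2 - σ + b - z) / 2)
      = π / Real.sin (π * ((σ - b + z) / 2)) := by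
    have h := Real.Gamma_mul_Gamma_one_sub ((σ - b + z) / 2)
    rw [show (1 : ℝ) - (σ - b + z) / 2 = (2 - σ + b - z) / 2 by ring] at h
    exact h
  set s₁ := Real.sin (π * ((σ + b + z) / 2)) with hs₁
  set s₂ := Real.sin (π * ((σ - b + z) / 2)) with hs₂
  -- product-to-sum trig identity
  have trig : Real.cos (π * b) - Real.cos (π * (z + σ)) = 2 * s₁ * s₂ := by
    rw [Real.cos_sub_cos, hs₁, hs₂]
    rw [show (π * b + π * (z + σ)) / 2 = π * ((σ + b + z) / 2) by ring,
        show (π * b - π * (z + σ)) / 2 = -(π * ((σ - b + z) / 2)) by ring,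
        Real.sin_neg]
    ring
  -- power arithmetic : 2^θ * (2^(-z) * 2^(1-θ+z)) = 2
  have pow2 : (2 : ℝ) ^ θ * ((2 : ℝ) ^ (-z) * (2 : ℝ) ^ (1 - θ + z)) = 2 := by
    rw [← Real.rpow_add two_pos, ← Real.rpow_add two_pos,
        show θ + (-z + (1 - θ + z)) = 1 by ring, Real.rpow_one]
  -- rewrite the denominator as a single fraction
  have denom : Real.Gamma ((σ + b + z) / 2) * Real.Gamma ((σ - b + z) / 2) *
      Real.Gamma ((2 - σ + b - z) / 2) * Real.Gamma ((2 - σ - b - z) / 2)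
      = π * π / (s₁ * s₂) := by
    calc Real.Gamma ((σ + b + z) / 2) * Real.Gamma ((σ - b + z) / 2) *
        Real.Gamma ((2 - σ + b - z) / 2) * Real.Gamma ((2 - σ - b - z) / 2)
        = (Real.Gamma ((σ + b + z) / 2) * Real.Gamma ((2 - σ - b - z) / 2)) *
          (Real.Gamma ((σ - b + z) / 2) * Real.Gamma ((2 - σ + b - z) / 2)) := by ring
      _ = (π / s₁) * (π / s₂) := by rw [r1, r2]
      _ = π * π / (s₁ * s₂) := div_mul_div_comm π s₁ π s₂
  rw [trig, denom]
  have numer : Real.Gamma ((1 + z) / 2) * Real.Gamma ((2 + z) / 2) *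
      Real.Gamma ((θ - z) / 2) * Real.Gamma ((1 + θ - z) / 2)
      = Real.Gamma (1 + z) * Real.Gamma (θ - z) *
        ((2 : ℝ) ^ (-z) * (2 : ℝ) ^ (1 - θ + z)) * π := by
    calc Real.Gamma ((1 + z) / 2) * Real.Gamma ((2 + z) / 2) *
        Real.Gamma ((θ - z) / 2) * Real.Gamma ((1 + θ - z) / 2)
        = (Real.Gamma ((1 + z) / 2) * Real.Gamma ((2 + z) / 2)) *
          (Real.Gamma ((θ - z) / 2) * Real.Gamma ((1 + θ - z) / 2)) := by ring
      _ = (Real.Gamma (1 + z) * (2 : ℝ) ^ (-z) * Real.sqrt π) *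
          (Real.Gamma (θ - z) * (2 : ℝ) ^ (1 - θ + z) * Real.sqrt π) := by rw [d1, d2]
      _ = Real.Gamma (1 + z) * Real.Gamma (θ - z) *
          ((2 : ℝ) ^ (-z) * (2 : ℝ) ^ (1 - θ + z)) * (Real.sqrt π * Real.sqrt π) := by ring
      _ = _ := by rw [hsq]
  rw [numer, div_div_eq_mul_div]
  rw [show (2 : ℝ) ^ θ * (Real.Gamma (1 + z) * Real.Gamma (θ - z) *
      ((2 : ℝ) ^ (-z) * (2 : ℝ) ^ (1 - θ + z)) * π) * (s₁ * s₂)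
      = ((2 : ℝ) ^ θ * ((2 : ℝ) ^ (-z) * (2 : ℝ) ^ (1 - θ + z))) *
        (Real.Gamma (1 + z) * Real.Gamma (θ - z) * π * (s₁ * s₂)) by ring, pow2]
  rw [show (2 : ℝ) * (Real.Gamma (1 + z) * Real.Gamma (θ - z) * π * (s₁ * s₂))
      = (Real.Gamma (1 + z) * Real.Gamma (θ - z) * (2 * s₁ * s₂) / π) * (π * π) by
        field_simp]
  rw [mul_div_assoc, div_self (mul_ne_zero hπ hπ), mul_one]
  ring
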